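/- Let $\mathbb{P}^{s-1}$ be the projective space over a finite field $K = \mathbb{F}_q$, let $\mathbb{X} = V_{\mathbb{P}^{s-1}}(G)$ be the projective variety defined by a finite set $G$ of nonzero homogeneous polynomials of $S = K[t_1,\ldots,t_s]$, and let $I(\mathbb{X})$ be the homogeneous vanishing ideal of $\mathbb{X}$. If $(I(\mathbb{P}^{s-1}) : (G)) \neq I(\mathbb{P}^{s-1})$, then $\mathrm{rad}(\{t_i t_j^q - t_i^q t_j \mid 1 \le i < j \le s\},\ G) = I(\mathbb{X})$. -/

import Mathlib

open MvPolynomial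
open scoped MonomialOrder

variable {K : Type*} [Field K] {s : ℕ}

/-- The exponent of the initial (leading) monomial of `f` with respect to the
monomial order `m` (it is `0` for `f = 0`). -/
noncomputable def leadExp (m : MonomialOrder (Fin s)) (f : MvPolynomial (Fin s) K) :
    Fin s →₀ ℕ :=
  m.toSyn.symm (f.support.sup fun a => m.toSyn a)

/-- The coefficient of the initial monomial of `f`; `f` is monic when this is `1`. -/
noncomputable def leadCoeff (m : MonomialOrder (Fin s)) (f : MvPolynomial (Fin s) K) : K :=
  f.coeff (leadExp m f)

/-- The initial monomial `in_≺(f)` of `f`, as a (monic) monomial of the polynomial ring. -/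
noncomputable def leadMon (m : MonomialOrder (Fin s)) (f : MvPolynomial (Fin s) K) :
    MvPolynomial (Fin s) K :=
  monomial (leadExp m f) (1 : K)

/-- The initial ideal `in_≺(I)` of an ideal `I`: the ideal generated by the initial
monomials of the nonzero elements of `I`. -/
noncomputable def initialIdeal (m : MonomialOrder (Fin s)) (I : Ideal (MvPolynomial (Fin s) K)) :
    Ideal (MvPolynomial (Fin s) K) :=
  Ideal.span { g | ∃ f ∈ I, f ≠ 0 ∧ g = leadMon m f }

/-- The footprint `Δ_≺(I)` of `S/I`: the set of standard monomials, i.e. the (monic)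
monomials that do not belong to the initial ideal of `I`. -/
noncomputable def stdMonomials (m : MonomialOrder (Fin s)) (I : Ideal (MvPolynomial (Fin s) K)) :
    Set (MvPolynomial (Fin s) K) :=
  { g | (∃ a : Fin s →₀ ℕ, g = monomial a (1 : K)) ∧ g ∉ initialIdeal m I }

/-- `KΔ_≺(I)`, the `K`-linear span of the standard monomials of `S/I`. -/
noncomputable def stdSpan (m : MonomialOrder (Fin s)) (I : Ideal (MvPolynomial (Fin s) K)) :
    Submodule K (MvPolynomial (Fin s) K) :=
  Submodule.span K (stdMonomials m I)

/-- A monomial order is graded if monomials are first compared by their total degrees. -/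
def IsGradedOrder (m : MonomialOrder (Fin s)) : Prop :=
  ∀ a b : Fin s →₀ ℕ, a.degree < b.degree → a ≺[m] b

/-- The vanishing ideal `I(X)` of a set of points `X ⊆ 𝔸^s = K^s`. -/
def affVanishingIdeal (X : Set (Fin s → K)) : Ideal (MvPolynomial (Fin s) K) where
  carrier := { f | ∀ x ∈ X, eval x f = 0 }
  add_mem' := by
    intro a b ha hb x hx
    simp [ha x hx, hb x hx]
  zero_mem' := by intro x hx; simp
  smul_mem' := by
    intro c f hf x hx
    simp [smul_eq_mul, hf x hx]

/-- The evaluation map `S → K^X`, `f ↦ (f(P₁),…,f(P_m))`, at the points of a finite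
set `X` of points of `𝔸^s`. -/
noncomputable def evalMap (X : Finset (Fin s → K)) :
    MvPolynomial (Fin s) K →ₗ[K] (X → K) where
  toFun f := fun x => eval (x : Fin s → K) f
  map_add' f g := by funext x; simp
  map_smul' c f := by funext x; simp [Algebra.smul_def]

/-- The degree `deg(S/I)`.  For the ideals considered in this paper `S/I` is a
zero-dimensional ring, and its degree (the normalized leading coefficient of the
affine Hilbert polynomial) equals `dim_K (S/I)` (and is `0` when `I = S`). -/
noncomputable def adeg (I : Ideal (MvPolynomial (Fin s) K)) : ℕ :=
  Module.finrank K (MvPolynomial (Fin s) K ⧸ I)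

/-- The affine Hilbert function `H_I^a(d) = dim_K (S_{≤d}/I_{≤d})`, computed as the
dimension of the image of `S_{≤d}` in `S/I`. -/
noncomputable def affineHilbert (I : Ideal (MvPolynomial (Fin s) K)) (d : ℕ) : ℕ :=
  Module.finrank K
    ((restrictTotalDegree (Fin s) K d).map (Submodule.restrictScalars K I).mkQ)

/-- The support `χ(D)` of a subcode `D ⊆ K^ι`. -/
def codeSupport {ι : Type*} (D : Submodule K (ι → K)) : Set ι :=
  { i | ∃ v ∈ D, v i ≠ 0 }

/-- The `r`-th generalized Hamming weight of a linear code `C ⊆ K^ι`: the minimum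
size of the support of an `r`-dimensional subcode. -/
noncomputable def ghw {ι : Type*} (C : Submodule K (ι → K)) (r : ℕ) : ℕ :=
  sInf { n | ∃ D : Submodule K (ι → K),
    D ≤ C ∧ Module.finrank K (↥D) = r ∧ (codeSupport D).ncard = n }

/-- The minimum distance of a linear code: the least Hamming weight of a nonzero
codeword. -/
noncomputable def minDist {ι : Type*} (C : Submodule K (ι → K)) : ℕ :=
  sInf { n | ∃ v ∈ C, v ≠ 0 ∧ ({ i : ι | v i ≠ 0 }).ncard = n }

/-- The affine torus `T = (K^*)^s`. -/
noncomputable def torus (K : Type*) [Field K] [Fintype K] (s : ℕ) : Finset (Fin s → K) :=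
  letI := Classical.decEq K
  Finset.univ.filter fun x => ∀ i, x i ≠ 0

/-- `V_d`: the set of squarefree (monic) monomials of degree `d`. -/
def sqfreeMonomials (K : Type*) [Field K] (s d : ℕ) : Set (MvPolynomial (Fin s) K) :=
  { g | ∃ a : Fin s →₀ ℕ, (∀ i, a i ≤ 1) ∧ a.degree = d ∧ g = monomial a (1 : K) }

/-- `V_{≤d}`: the set of squarefree (monic) monomials of degree at most `d`. -/
def sqfreeMonomialsLe (K : Type*) [Field K] (s d : ℕ) : Set (MvPolynomial (Fin s) K) :=
  { g | ∃ a : Fin s →₀ ℕ, (∀ i, a i ≤ 1) ∧ a.degree ≤ d ∧ g = monomial a (1 : K) }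

/-- The homogeneous vanishing ideal of a set `Y` of (representatives of) projective
points: the ideal generated by the homogeneous polynomials vanishing on `Y`. -/
noncomputable def projVanishingIdeal (Y : Set (Fin s → K)) :
    Ideal (MvPolynomial (Fin s) K) :=
  Ideal.span { f | (∃ n, f.IsHomogeneous n) ∧ ∀ x ∈ Y, eval x f = 0 }


section NullstellensatzAux

private lemma aux_eval₂_homog {R : Type*} [CommRing R] (ι : K →+* R)
    {f : MvPolynomial (Fin s) K} {n : ℕ} (hf : f.IsHomogeneous n) (c : R) (y y' : Fin s → R)
    (hy : ∀ i, y' i = c * y i) :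
    eval₂ ι y' f = c ^ n * eval₂ ι y f := by
  conv_lhs => rw [f.as_sum]
  conv_rhs => rw [f.as_sum]
  rw [eval₂_sum, eval₂_sum, Finset.mul_sum]
  refine Finset.sum_congr rfl fun v hv => ?_
  have hdeg : ∑ i ∈ v.support, v i = n := by
    by_contra h
    exact MvPolynomial.mem_support_iff.mp hv (hf.coeff_eq_zero h)
  rw [eval₂_monomial, eval₂_monomial, Finsupp.prod, Finsupp.prod]
  simp only [hy, mul_pow]
  rw [Finset.prod_mul_distrib, Finset.prod_pow_eq_pow_sum, hdeg]
  ring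

/-- Evaluation of a polynomial along the parametrized line through `x`. -/
private noncomputable def phiAux (x : Fin s → K) : MvPolynomial (Fin s) K →+* Polynomial K :=
  eval₂Hom Polynomial.C fun i => Polynomial.C (x i) * Polynomial.X

private lemma phiAux_homog (x : Fin s → K) {f : MvPolynomial (Fin s) K} {n : ℕ}
    (hf : f.IsHomogeneous n) :
    phiAux x f = Polynomial.C (eval x f) * Polynomial.X ^ n := by
  have h1 : phiAux x f = eval₂ Polynomial.C (fun i => Polynomial.C (x i) * Polynomial.X) f := by
    simp only [phiAux, coe_eval₂Hom]
  rw [h1, aux_eval₂_homog Polynomial.C hf Polynomial.X (fun i => Polynomial.C (x i)) _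
    (fun i => mul_comm _ _), mul_comm]
  congr 1
  have h2 := eval₂_comp_left (Polynomial.C : K →+* Polynomial K) (RingHom.id K) x f
  rw [show eval x f = eval₂ (RingHom.id K) x f from rfl, h2]
  simp [Function.comp_def]

private lemma coeff_phiAux (x : Fin s → K) (f : MvPolynomial (Fin s) K) (d : ℕ) :
    (phiAux x f).coeff d = eval x (homogeneousComponent d f) := by
  induction f using MvPolynomial.induction_on' with
  | monomial v c =>
    rw [phiAux_homog x (isHomogeneous_monomial c rfl), Polynomial.coeff_C_mul,
      Polynomial.coeff_X_pow,
      homogeneousComponent_of_mem ((mem_homogeneousSubmodule v.degree (monomial v c)).mpr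
        (isHomogeneous_monomial c rfl))]
    split_ifs <;> simp_all
  | add p q hp hq =>
    rw [map_add, Polynomial.coeff_add, map_add, map_add, hp, hq]

private lemma mem_projVanishingIdeal_iff {Y : Set (Fin s → K)} {f : MvPolynomial (Fin s) K} :
    f ∈ projVanishingIdeal Y ↔ ∀ x ∈ Y, phiAux x f = 0 := by
  constructor
  · intro hf x hx
    refine (?_ : projVanishingIdeal Y ≤ RingHom.ker (phiAux x)) hf
    rw [projVanishingIdeal, Ideal.span_le]
    rintro g ⟨⟨n, hg⟩, hvan⟩
    rw [SetLike.mem_coe, RingHom.mem_ker, phiAux_homog x hg, hvan x hx, map_zero, zero_mul]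
  · intro h
    rw [← f.sum_homogeneousComponent]
    apply Ideal.sum_mem
    intro d _
    apply Ideal.subset_span
    refine ⟨⟨d, homogeneousComponent_isHomogeneous d f⟩, fun x hx => ?_⟩
    rw [← coeff_phiAux, h x hx, Polynomial.coeff_zero]

private lemma projVanishingIdeal_isRadical (Y : Set (Fin s → K)) :
    (projVanishingIdeal Y).IsRadical := by
  rw [Ideal.isRadical_iff_pow_one_lt 2 one_lt_two]
  intro r hr
  rw [mem_projVanishingIdeal_iff] at hr ⊢
  intro x hx
  have h2 : phiAux x r ^ 2 = 0 := by rw [← map_pow]; exact hr x hx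
  exact pow_eq_zero_iff (by norm_num) |>.mp h2

end NullstellensatzAux

set_option maxHeartbeats 1000000 in
set_option synthInstance.maxHeartbeats 400000 in
private lemma aux_prime_le [Fintype K] (G : Finset (MvPolynomial (Fin s) K))
    (hG : ∀ g ∈ G, g ≠ 0 ∧ ∃ n, g.IsHomogeneous n)
    (hY : ∃ p : Fin s → K, p ≠ 0 ∧ ∀ g ∈ G, eval p g = 0)
    (P : Ideal (MvPolynomial (Fin s) K)) (hP : P.IsPrime)
    (hJP : Ideal.span ({ f | ∃ i j : Fin s, i < j ∧
          f = X i * X j ^ Fintype.card K - X i ^ Fintype.card K * X j } ∪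
        (G : Set (MvPolynomial (Fin s) K))) ≤ P) :
    projVanishingIdeal { x : Fin s → K | x ≠ 0 ∧ ∀ g ∈ G, eval x g = 0 } ≤ P := by
  classical
  haveI := hP
  by_cases hXP : ∀ i, (X i : MvPolynomial (Fin s) K) ∈ P
  · -- all variables belong to P
    obtain ⟨p, hp0, hpG⟩ := hY
    rw [projVanishingIdeal, Ideal.span_le]
    rintro f ⟨⟨n, hfh⟩, hvan⟩
    rcases Nat.eq_zero_or_pos n with rfl | hn
    · have hf : f = C (coeff 0 f) := by
        have h := homogeneousComponent_of_mem
          ((mem_homogeneousSubmodule 0 f).mpr hfh) (m := 0)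
        rw [if_pos rfl] at h
        conv_lhs => rw [← h, homogeneousComponent_zero]
      have hc : coeff 0 f = 0 := by
        have h := hvan p ⟨hp0, hpG⟩
        rwa [hf, eval_C] at h
      rw [SetLike.mem_coe, hf, hc, map_zero]
      exact P.zero_mem
    · have hf : f ∈ Ideal.span (X '' (Set.univ : Set (Fin s)) :
          Set (MvPolynomial (Fin s) K)) := by
        rw [mem_ideal_span_X_image]
        intro m hm
        have hdeg : m.degree = n := by
          by_contra h
          exact mem_support_iff.mp hm (hfh.coeff_eq_zero h)
        by_contra h
        push_neg at h
        have hm0 : m = 0 := Finsupp.ext fun i => by simpa using h i (Set.mem_univ i)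
        rw [hm0] at hdeg
        simp only [map_zero] at hdeg
        omega
      refine Ideal.span_le.mpr ?_ hf
      rintro _ ⟨i, -, rfl⟩
      exact hXP i
  · -- some variable is outside P
    push_neg at hXP
    obtain ⟨k, hk⟩ := hXP
    set L := FractionRing (MvPolynomial (Fin s) K ⧸ P) with hL
    set ψ : MvPolynomial (Fin s) K →+* L :=
      (algebraMap (MvPolynomial (Fin s) K ⧸ P) L).comp (Ideal.Quotient.mk P) with hψdef
    have hψ : ∀ f, ψ f = 0 ↔ f ∈ P := by
      intro f
      simp only [hψdef, RingHom.comp_apply, IsFractionRing.to_map_eq_zero_iff,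
        Ideal.Quotient.eq_zero_iff_mem]
    set ι : K →+* L := ψ.comp MvPolynomial.C with hι
    have hιinj : Function.Injective ι := ι.injective
    set τ : Fin s → L := fun i => ψ (X i) with hτ
    have hτk : τ k ≠ 0 := fun h => hk ((hψ _).mp h)
    have hbin : ∀ i, τ i * τ k ^ Fintype.card K = τ i ^ Fintype.card K * τ k := by
      intro i
      rcases lt_trichotomy i k with h | rfl | h
      · have hm := (hψ _).mpr (hJP (Ideal.subset_span (Or.inl ⟨i, k, h, rfl⟩)))
        rw [map_sub, sub_eq_zero, map_mul, map_mul, map_pow, map_pow] at hm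
        exact hm
      · ring
      · have hm := (hψ _).mpr (hJP (Ideal.subset_span (Or.inl ⟨k, i, h, rfl⟩)))
        rw [map_sub, sub_eq_zero, map_mul, map_mul, map_pow, map_pow] at hm
        linear_combination -hm
    have hpsi : ∀ f, ψ f = eval₂ ι τ f := by
      intro f
      conv_lhs => rw [← MvPolynomial.eval₂_eta f]
      rw [show (MvPolynomial.eval₂ MvPolynomial.C MvPolynomial.X f : MvPolynomial (Fin s) K)
        = eval₂ (MvPolynomial.C : K →+* MvPolynomial (Fin s) K) MvPolynomial.X f from rfl,
        eval₂_comp_left ψ (MvPolynomial.C : K →+* MvPolynomial (Fin s) K) MvPolynomial.X f]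
      rfl
    have hu : ∀ i, (τ i / τ k) ^ Fintype.card K = τ i / τ k := by
      intro i
      rw [div_pow, div_eq_div_iff (pow_ne_zero _ hτk) hτk]
      linear_combination (hbin i).symm
    have hroots : ∀ z : L, z ^ Fintype.card K = z → ∃ c : K, ι c = z := by
      intro z hz
      by_contra hc
      push_neg at hc
      have hq2 : 1 < Fintype.card K := Fintype.one_lt_card
      set Q : Polynomial L := Polynomial.X ^ Fintype.card K - Polynomial.X with hQ
      have hQdeg : Q.natDegree = Fintype.card K := by
        rw [hQ, Polynomial.natDegree_sub_eq_left_of_natDegree_lt, Polynomial.natDegree_X_pow]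
        rw [Polynomial.natDegree_X_pow, Polynomial.natDegree_X]
        exact hq2
      have hQ0 : Q ≠ 0 := by
        intro h
        rw [h, Polynomial.natDegree_zero] at hQdeg
        omega
      have hroot : ∀ w : L, w ^ Fintype.card K = w → w ∈ Q.roots.toFinset := by
        intro w hw
        rw [Multiset.mem_toFinset, Polynomial.mem_roots hQ0]
        simp [hQ, Polynomial.IsRoot, hw]
      have hsub : insert z (Finset.univ.image ι) ⊆ Q.roots.toFinset := by
        intro w hw
        rcases Finset.mem_insert.mp hw with rfl | hw
        · exact hroot w hz
        · obtain ⟨c, -, rfl⟩ := Finset.mem_image.mp hw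
          exact hroot _ (by rw [← map_pow, FiniteField.pow_card])
      have hzim : z ∉ Finset.univ.image ι := by
        intro h
        obtain ⟨c, -, hcz⟩ := Finset.mem_image.mp h
        exact hc c hcz
      have hcard := Finset.card_le_card hsub
      rw [Finset.card_insert_of_notMem hzim, Finset.card_image_of_injective _ hιinj,
        Finset.card_univ] at hcard
      have hle := (Multiset.toFinset_card_le Q.roots).trans
        ((Polynomial.card_roots' Q).trans_eq hQdeg)
      omega
    choose p' hp' using fun i => hroots _ (hu i)
    have hτi : ∀ i, τ i = τ k * ι (p' i) := by
      intro i
      rw [hp' i, mul_div_assoc', mul_comm, mul_div_assoc, div_self hτk, mul_one]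
    have key : ∀ (f : MvPolynomial (Fin s) K) (n : ℕ), f.IsHomogeneous n →
        ψ f = τ k ^ n * ι (eval p' f) := by
      intro f n hf
      rw [hpsi, aux_eval₂_homog ι hf (τ k) (fun i => ι (p' i)) τ hτi]
      congr 1
      have h2 := eval₂_comp_left ι (RingHom.id K) p' f
      rw [show eval p' f = eval₂ (RingHom.id K) p' f from rfl, h2]
      simp [Function.comp_def]
    have hp'k : p' k = 1 := by
      apply hιinj
      rw [hp' k, map_one, div_self hτk]
    have hp'0 : (p' : Fin s → K) ≠ 0 := by
      intro h
      rw [h] at hp'k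
      simp at hp'k
    have hp'G : ∀ g ∈ G, eval p' g = 0 := by
      intro g hg
      obtain ⟨n, hgh⟩ := (hG g hg).2
      have h0 : ψ g = 0 := (hψ g).mpr (hJP (Ideal.subset_span (Or.inr hg)))
      rw [key g n hgh] at h0
      rcases mul_eq_zero.mp h0 with h | h
      · exact absurd h (pow_ne_zero _ hτk)
      · apply hιinj
        rw [h, map_zero]
    rw [projVanishingIdeal, Ideal.span_le]
    rintro f ⟨⟨n, hfh⟩, hvan⟩
    rw [SetLike.mem_coe, ← hψ f, key f n hfh, hvan p' ⟨hp'0, hp'G⟩, map_zero, mul_zero]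

/-- Theorem (projective Nullstellensatz over a finite field). Here a projective point
of `ℙ^{s-1}` is encoded by the set of its nonzero representatives in `K^s`. -/
theorem projective_nullstellensatz_finite_field [Fintype K]
    (G : Finset (MvPolynomial (Fin s) K))
    (hG : ∀ g ∈ G, g ≠ 0 ∧ ∃ n, g.IsHomogeneous n)
    (hcol : Submodule.colon (projVanishingIdeal { x : Fin s → K | x ≠ 0 })
        (Ideal.span (G : Set (MvPolynomial (Fin s) K))) ≠
      projVanishingIdeal { x : Fin s → K | x ≠ 0 }) :
    (Ideal.span ({ f | ∃ i j : Fin s, i < j ∧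
          f = X i * X j ^ Fintype.card K - X i ^ Fintype.card K * X j } ∪
        (G : Set (MvPolynomial (Fin s) K)))).radical =
      projVanishingIdeal { x : Fin s → K | x ≠ 0 ∧ ∀ g ∈ G, eval x g = 0 } := by
  classical
  -- The projective variety is nonempty thanks to the colon hypothesis.
  have hY : ∃ p : Fin s → K, p ≠ 0 ∧ ∀ g ∈ G, eval p g = 0 := by
    by_contra hY
    push_neg at hY
    apply hcol
    refine le_antisymm ?_ (fun f hf => Submodule.mem_colon.mpr fun g _ =>
      Ideal.mul_mem_right g _ hf)
    intro f hf
    rw [mem_projVanishingIdeal_iff]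
    intro x hx
    obtain ⟨g, hgG, hgx⟩ := hY x hx
    have hfg : f * g ∈ projVanishingIdeal { x : Fin s → K | x ≠ 0 } := by
      simpa [smul_eq_mul] using Submodule.mem_colon.mp hf g (Ideal.subset_span hgG)
    have h0 := mem_projVanishingIdeal_iff.mp hfg x hx
    rw [map_mul] at h0
    rcases mul_eq_zero.mp h0 with h | h
    · exact h
    · obtain ⟨n, hgh⟩ := (hG g hgG).2
      rw [phiAux_homog x hgh] at h
      exact absurd h (mul_ne_zero (Polynomial.C_ne_zero.mpr hgx)
        (pow_ne_zero _ Polynomial.X_ne_zero))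
  apply le_antisymm
  · -- easy inclusion
    rw [(projVanishingIdeal_isRadical _).radical_le_iff, Ideal.span_le]
    rintro f (⟨i, j, hij, rfl⟩ | hfG)
    · apply Ideal.subset_span
      constructor
      · refine ⟨Fintype.card K + 1, ?_⟩
        have h1 : (X i * X j ^ Fintype.card K :
            MvPolynomial (Fin s) K).IsHomogeneous (Fintype.card K + 1) := by
          simpa [one_mul, add_comm] using
            (isHomogeneous_X K i).mul ((isHomogeneous_X K j).pow (Fintype.card K))
        have h2 : (X i ^ Fintype.card K * X j :
            MvPolynomial (Fin s) K).IsHomogeneous (Fintype.card K + 1) := by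
          simpa [one_mul] using
            ((isHomogeneous_X K i).pow (Fintype.card K)).mul (isHomogeneous_X K j)
        exact h1.sub h2
      · intro x _
        rw [map_sub, map_mul, map_mul, map_pow, map_pow, eval_X, eval_X,
          FiniteField.pow_card, FiniteField.pow_card, sub_self]
    · exact Ideal.subset_span ⟨(hG f hfG).2, fun x hx => hx.2 f hfG⟩
  · -- hard inclusion
    rw [Ideal.radical_eq_sInf]
    apply le_sInf
    rintro P ⟨hJP, hP⟩
    exact aux_prime_le G hG hY P hP hJP
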